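/- Let $\alpha\in(0,1)$, $T>0$ and $w\in C^1([0,T])$. If $w$ attains its maximum over $[0,T]$ at a point $t_0\in(0,T]$ and $w(t_0)\ge w(0)$, then the Caputo derivative satisfies $\partial_t^\alpha w(t_0)\ge 0$. -/

import Mathlib

open Real MeasureTheory intervalIntegral
open Topology Filter

/-- Caputo fractional derivative of order `α` of `φ` at `t`. -/
noncomputable def caputoDeriv (α : ℝ) (φ : ℝ → ℝ) (t : ℝ) : ℝ :=
  (1 / Real.Gamma (1 - α)) * ∫ τ in (0:ℝ)..t, (t - τ) ^ (-α) * deriv φ τ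

/-- Extremum principle for the Caputo derivative (Luchko). -/
theorem caputo_extremum_principle
    (α T : ℝ) (hα : α ∈ Set.Ioo (0:ℝ) 1) (hT : 0 < T)
    (w : ℝ → ℝ) (hw : ContDiff ℝ 1 w)
    (t₀ : ℝ) (ht₀ : t₀ ∈ Set.Ioc 0 T)
    (hmax : ∀ t, t ∈ Set.Icc 0 T → w t ≤ w t₀)
    (h0 : w 0 ≤ w t₀) :
    0 ≤ caputoDeriv α w t₀ := by
  obtain ⟨hα0, hα1⟩ := hα
  obtain ⟨ht₀0, ht₀T⟩ := ht₀
  have hwd : Differentiable ℝ w := hw.differentiable one_ne_zero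
  have hw' : Continuous (deriv w) := hw.continuous_deriv le_rfl
  -- Lipschitz bound
  obtain ⟨K, hK⟩ := (isCompact_Icc (a := (0:ℝ)) (b := T)).exists_bound_of_continuousOn
    hw'.continuousOn
  have hK0 : 0 ≤ K := le_trans (norm_nonneg _) (hK 0 ⟨le_rfl, hT.le⟩)
  have hlip : ∀ x ∈ Set.Icc 0 T, ∀ y ∈ Set.Icc 0 T, |w y - w x| ≤ K * |y - x| := by
    intro x hx y hy
    exact (convex_Icc 0 T).norm_image_sub_le_of_norm_deriv_le
      (fun z _ => hwd z) hK hx hy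
  -- integrability of the integrand on [0, t₀]
  have hint : IntervalIntegrable (fun τ => (t₀ - τ) ^ (-α) * deriv w τ) volume 0 t₀ := by
    have h1 : IntervalIntegrable (fun x : ℝ => x ^ (-α)) volume 0 t₀ :=
      intervalIntegral.intervalIntegrable_rpow' (by linarith)
    have h2 := h1.comp_sub_left t₀
    simp only [sub_zero, sub_self] at h2
    exact h2.symm.mul_continuousOn hw'.continuousOn
  -- primitive is continuous
  have hFcont : ContinuousOn (fun b => ∫ τ in (0:ℝ)..b, (t₀ - τ) ^ (-α) * deriv w τ)
      (Set.uIcc 0 t₀) :=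
    continuousOn_primitive_interval' hint Set.left_mem_uIcc
  -- key inequality on [0, t₀)
  have key : ∀ b ∈ Set.Ico (0:ℝ) t₀,
      -(K * (t₀ - b) ^ (1 - α)) ≤ ∫ τ in (0:ℝ)..b, (t₀ - τ) ^ (-α) * deriv w τ := by
    intro b hb
    obtain ⟨hb0, hbt⟩ := hb
    have hbT : b ≤ T := le_of_lt (lt_of_lt_of_le hbt ht₀T)
    have huIcc : Set.uIcc (0:ℝ) b = Set.Icc 0 b := Set.uIcc_of_le hb0
    have hupos : ∀ x ∈ Set.Icc (0:ℝ) b, 0 < t₀ - x := fun x hx => by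
      have := hx.2; linarith
    have hu : ∀ x ∈ Set.uIcc (0:ℝ) b,
        HasDerivAt (fun τ => (t₀ - τ) ^ (-α)) (α * (t₀ - x) ^ (-α - 1)) x := by
      intro x hx
      rw [huIcc] at hx
      have h1 : HasDerivAt (fun τ : ℝ => t₀ - τ) (-1) x := by
        simpa using (hasDerivAt_id x).const_sub t₀
      have h2 : HasDerivAt (fun y : ℝ => y ^ (-α)) (-α * (t₀ - x) ^ (-α - 1)) (t₀ - x) :=
        Real.hasDerivAt_rpow_const (Or.inl (ne_of_gt (hupos x hx)))
      have := h2.comp x h1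
      simpa [Function.comp_def, mul_comm, mul_assoc, mul_left_comm] using this
    have hv : ∀ x ∈ Set.uIcc (0:ℝ) b,
        HasDerivAt (fun τ => w τ - w t₀) (deriv w x) x := fun x _ =>
      ((hwd x).hasDerivAt).sub_const _
    have hu' : IntervalIntegrable (fun x => α * (t₀ - x) ^ (-α - 1)) volume 0 b := by
      apply ContinuousOn.intervalIntegrable
      apply continuousOn_const.mul
      apply ContinuousOn.rpow_const
      · exact (continuousOn_const.sub continuousOn_id)
      · intro x hx
        rw [huIcc] at hx
        exact Or.inl (ne_of_gt (hupos x hx))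
    have hv' : IntervalIntegrable (deriv w) volume 0 b := hw'.intervalIntegrable 0 b
    have hparts := intervalIntegral.integral_mul_deriv_eq_deriv_mul hu hv hu' hv'
    rw [hparts]
    have hterm2 : 0 ≤ -((t₀ - 0) ^ (-α) * (w 0 - w t₀)) := by
      have h1 : (0:ℝ) ≤ (t₀ - 0) ^ (-α) := Real.rpow_nonneg (by linarith) _
      nlinarith
    have hterm3 : (∫ x in (0:ℝ)..b, α * (t₀ - x) ^ (-α - 1) * (w x - w t₀)) ≤ 0 := by
      have hnn : (0:ℝ) ≤ ∫ x in (0:ℝ)..b, -(α * (t₀ - x) ^ (-α - 1) * (w x - w t₀)) := by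
        apply intervalIntegral.integral_nonneg hb0
        intro u hu
        have h1 : (0:ℝ) ≤ α * (t₀ - u) ^ (-α - 1) :=
          mul_nonneg hα0.le (Real.rpow_nonneg (le_of_lt (hupos u hu)) _)
        have h2 : w u - w t₀ ≤ 0 := by
          have := hmax u ⟨hu.1, le_trans hu.2 hbT⟩; linarith
        have := mul_nonpos_of_nonneg_of_nonpos h1 h2
        linarith
      rw [intervalIntegral.integral_neg] at hnn
      linarith
    have hterm1 : -(K * (t₀ - b) ^ (1 - α)) ≤ (t₀ - b) ^ (-α) * (w b - w t₀) := by
      have hpos : (0:ℝ) < t₀ - b := by linarith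
      have hb1 : |w b - w t₀| ≤ K * |b - t₀| :=
        hlip t₀ ⟨ht₀0.le, ht₀T⟩ b ⟨hb0, hbT⟩
      have habs : |b - t₀| = t₀ - b := by rw [abs_sub_comm]; exact abs_of_pos hpos
      have hwb : -(K * (t₀ - b)) ≤ w b - w t₀ := by
        rw [habs] at hb1
        have := neg_abs_le (w b - w t₀)
        linarith [abs_le.mp hb1]
      have hrp : (0:ℝ) ≤ (t₀ - b) ^ (-α) := Real.rpow_nonneg hpos.le _
      have h2 : (t₀ - b) ^ (-α) * -(K * (t₀ - b)) ≤ (t₀ - b) ^ (-α) * (w b - w t₀) :=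
        mul_le_mul_of_nonneg_left hwb hrp
      calc -(K * (t₀ - b) ^ (1 - α)) = (t₀ - b) ^ (-α) * -(K * (t₀ - b)) := by
            rw [show (1:ℝ) - α = -α + 1 by ring, Real.rpow_add hpos, Real.rpow_one]; ring
        _ ≤ _ := h2
    linarith
  -- pass to the limit b → t₀⁻
  have hne : (𝓝[Set.Ico (0:ℝ) t₀] t₀).NeBot := by
    apply mem_closure_iff_nhdsWithin_neBot.mp
    rw [closure_Ico (ne_of_lt ht₀0)]
    exact ⟨ht₀0.le, le_rfl⟩
  have huIcc0 : Set.uIcc (0:ℝ) t₀ = Set.Icc 0 t₀ := Set.uIcc_of_le ht₀0.le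
  have hFlim : Filter.Tendsto (fun b => ∫ τ in (0:ℝ)..b, (t₀ - τ) ^ (-α) * deriv w τ)
      (𝓝[Set.Ico (0:ℝ) t₀] t₀)
      (𝓝 (∫ τ in (0:ℝ)..t₀, (t₀ - τ) ^ (-α) * deriv w τ)) := by
    have h1 := hFcont t₀ (by rw [huIcc0]; exact ⟨ht₀0.le, le_rfl⟩)
    rw [huIcc0] at h1
    exact h1.mono_left (nhdsWithin_mono _ Set.Ico_subset_Icc_self)
  have hGlim : Filter.Tendsto (fun b => -(K * (t₀ - b) ^ (1 - α)))
      (𝓝[Set.Ico (0:ℝ) t₀] t₀) (𝓝 0) := by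
    have h1 : ContinuousWithinAt (fun b : ℝ => -(K * (t₀ - b) ^ (1 - α)))
        (Set.Ico 0 t₀) t₀ := by
      apply ContinuousWithinAt.neg
      apply ContinuousWithinAt.mul continuousWithinAt_const
      apply ContinuousWithinAt.rpow_const
      · exact (continuousWithinAt_const.sub continuousWithinAt_id)
      · right; linarith
    rw [ContinuousWithinAt] at h1
    simpa [sub_self, Real.zero_rpow (show (1:ℝ) - α ≠ 0 by intro h; linarith)] using h1
  have hfinal : (0:ℝ) ≤ ∫ τ in (0:ℝ)..t₀, (t₀ - τ) ^ (-α) * deriv w τ :=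
    le_of_tendsto_of_tendsto hGlim hFlim
      (Filter.eventually_inf_principal.mpr (Filter.Eventually.of_forall key))
  unfold caputoDeriv
  have hΓ : 0 < Real.Gamma (1 - α) := Real.Gamma_pos_of_pos (by linarith)
  positivity
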